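/- Bound on type II errors between CQ channels: For any parameters α > 1 and ε ∈ [0,1), and any CQ channels Φ1, Φ2 : X → D(H), it holds that −log β_ε(Φ1‖Φ2) ≤ D̃_α(Φ1‖Φ2) + (α/(α−1)) log(1/(1−ε)). -/

import Mathlib

open scoped Kronecker
open Filter Matrix
open scoped ComplexOrder

attribute [local instance] Classical.propDecidable

noncomputable section

namespace CQ

variable {X d : Type*}

/-- Apply a real function to a matrix via its spectral decomposition (junk value `0` if the
matrix is not Hermitian).  For positive semidefinite matrices and `f 0 = 0` this realizes the
"on-support" functional calculus. -/
def matFun [Fintype d] [DecidableEq d] (f : ℝ → ℝ) (A : Matrix d d ℂ) : Matrix d d ℂ :=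
  if hA : A.IsHermitian then
    (hA.eigenvectorUnitary : Matrix d d ℂ) *
      Matrix.diagonal (fun i => (f (hA.eigenvalues i) : ℂ)) *
      star (hA.eigenvectorUnitary : Matrix d d ℂ)
  else 0

/-- Matrix logarithm taken on the support. -/
def matLog [Fintype d] [DecidableEq d] (A : Matrix d d ℂ) : Matrix d d ℂ := matFun Real.log A

/-- Real matrix power taken on the support. -/
def matRpow [Fintype d] [DecidableEq d] (A : Matrix d d ℂ) (r : ℝ) : Matrix d d ℂ :=
  matFun (fun t => t ^ r) A

/-- Projection `{A ≥ 0}` onto the eigenspaces of nonnegative eigenvalues of a Hermitian matrix. -/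
def posProj [Fintype d] [DecidableEq d] (A : Matrix d d ℂ) : Matrix d d ℂ :=
  matFun (fun t => if 0 ≤ t then 1 else 0) A

/-- `supp A ⊆ supp B`, expressed via ranges. -/
def suppLE [Fintype d] [DecidableEq d] (A B : Matrix d d ℂ) : Prop :=
  LinearMap.range (Matrix.toLin' A) ≤ LinearMap.range (Matrix.toLin' B)

/-- Quantum (Umegaki) relative entropy, with value `⊤` when the support condition fails. -/
def qRelEntropy [Fintype d] [DecidableEq d] (ρ σ : Matrix d d ℂ) : EReal :=
  if suppLE ρ σ then (((ρ * (matLog ρ - matLog σ)).trace.re : ℝ) : EReal) else ⊤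

/-- Sandwiched Rényi relative entropy of order `α`, with value `⊤` when the support condition
fails. -/
def sandRenyi [Fintype d] [DecidableEq d] (α : ℝ) (ρ σ : Matrix d d ℂ) : EReal :=
  if suppLE ρ σ then
    ((((α - 1)⁻¹ *
        Real.log ((matRpow (matRpow σ ((1 - α) / (2 * α)) * ρ *
          matRpow σ ((1 - α) / (2 * α))) α).trace.re)) : ℝ) : EReal)
  else ⊤

/-- A CQ channel: every output is a density operator. -/
def IsCQChannel [Fintype d] (Φ : X → Matrix d d ℂ) : Prop :=
  ∀ x, (Φ x).PosSemidef ∧ (Φ x).trace = 1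

/-- Channel divergence `D(Φ₁‖Φ₂) = max_x D(Φ₁(x)‖Φ₂(x))`. -/
def chDiv [Fintype X] [Fintype d] [DecidableEq d] (Φ₁ Φ₂ : X → Matrix d d ℂ) : EReal :=
  ⨆ x, qRelEntropy (Φ₁ x) (Φ₂ x)

/-- Sandwiched Rényi channel divergence. -/
def chRenyiDiv [Fintype X] [Fintype d] [DecidableEq d] (α : ℝ) (Φ₁ Φ₂ : X → Matrix d d ℂ) :
    EReal :=
  ⨆ x, sandRenyi α (Φ₁ x) (Φ₂ x)

/-- `D(Φ‖𝓕) = min_{Φf ∈ 𝓕} D(Φ‖Φf)`. -/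
def chDivSet [Fintype X] [Fintype d] [DecidableEq d] (Φ : X → Matrix d d ℂ)
    (S : Set (X → Matrix d d ℂ)) : EReal :=
  ⨅ Φf ∈ S, chDiv Φ Φf

/-- `D̃_α(Φ‖𝓕) = min_{Φf ∈ 𝓕} D̃_α(Φ‖Φf)`. -/
def chRenyiDivSet [Fintype X] [Fintype d] [DecidableEq d] (α : ℝ) (Φ : X → Matrix d d ℂ)
    (S : Set (X → Matrix d d ℂ)) : EReal :=
  ⨅ Φf ∈ S, chRenyiDiv α Φ Φf

/-- Probability distribution on a finite alphabet. -/
def IsProbDist [Fintype X] (p : X → ℝ) : Prop := (∀ x, 0 ≤ p x) ∧ ∑ x, p x = 1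

/-- POVM element: `0 ≤ T ≤ 1`. -/
def IsPOVMElem [Fintype d] [DecidableEq d] (T : Matrix d d ℂ) : Prop :=
  T.PosSemidef ∧ (1 - T).PosSemidef

/-- Type-I error of the test `(p, {T_x})` for the channel `Φ`. -/
def typeIErrVal [Fintype X] [Fintype d] [DecidableEq d] (Φ : X → Matrix d d ℂ) (p : X → ℝ)
    (T : X → Matrix d d ℂ) : ℝ :=
  ∑ x, p x * ((1 - T x) * Φ x).trace.re

/-- Optimal type-II error `β_ε(Φ₁‖Φ₂)` between two CQ channels. -/
def typeIIErr [Fintype X] [Fintype d] [DecidableEq d] (ε : ℝ) (Φ₁ Φ₂ : X → Matrix d d ℂ) : ℝ :=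
  sInf { v | ∃ p T, IsProbDist p ∧ (∀ x, IsPOVMElem (T x)) ∧ typeIErrVal Φ₁ p T ≤ ε ∧
    v = ∑ x, p x * (T x * Φ₂ x).trace.re }

/-- Optimal type-II error `β_ε(Φ‖𝓕)` against a set of CQ channels. -/
def typeIIErrSet [Fintype X] [Fintype d] [DecidableEq d] (ε : ℝ) (Φ : X → Matrix d d ℂ)
    (S : Set (X → Matrix d d ℂ)) : ℝ :=
  sInf { v | ∃ p T, IsProbDist p ∧ (∀ x, IsPOVMElem (T x)) ∧ typeIErrVal Φ p T ≤ ε ∧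
    v = sSup { w | ∃ Φf ∈ S, w = ∑ x, p x * (T x * Φf x).trace.re } }

/-- Tensor product of two CQ channels. -/
def prodChannel {X' d' : Type*} (Φ : X → Matrix d d ℂ) (Φ' : X' → Matrix d' d' ℂ) :
    X × X' → Matrix (d × d') (d × d') ℂ :=
  fun x => Φ x.1 ⊗ₖ Φ' x.2

/-- `n`-fold tensor power `Φ^{⊗n}` of a CQ channel, realized entrywise. -/
def powChannel (Φ : X → Matrix d d ℂ) (n : ℕ) :
    (Fin n → X) → Matrix (Fin n → d) (Fin n → d) ℂ :=
  fun xs => Matrix.of fun i j => ∏ k, Φ (xs k) (i k) (j k)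

def finEquiv (n m : ℕ) (γ : Type*) : ((Fin n → γ) × (Fin m → γ)) ≃ (Fin (n + m) → γ) :=
  (Equiv.sumArrowEquivProdArrow (Fin n) (Fin m) γ).symm.trans
    (Equiv.arrowCongr finSumFinEquiv (Equiv.refl γ))

/-- Tensor product of an `n`-fold and an `m`-fold CQ channel, as an `(n+m)`-fold CQ channel. -/
def cqTensor {n m : ℕ} (Φ : (Fin n → X) → Matrix (Fin n → d) (Fin n → d) ℂ)
    (Ψ : (Fin m → X) → Matrix (Fin m → d) (Fin m → d) ℂ) :
    (Fin (n + m) → X) → Matrix (Fin (n + m) → d) (Fin (n + m) → d) ℂ :=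
  fun xs =>
    Matrix.reindex (finEquiv n m d) (finEquiv n m d)
      (Φ ((finEquiv n m X).symm xs).1 ⊗ₖ Ψ ((finEquiv n m X).symm xs).2)

/-- All members of the family are CQ channels. -/
def FamilyCQ [Fintype d]
    (F : (n : ℕ) → Set ((Fin n → X) → Matrix (Fin n → d) (Fin n → d) ℂ)) : Prop :=
  ∀ n, ∀ Φ ∈ F n, IsCQChannel Φ

/-- Axiom CQ1: each set contains a CQ channel whose outputs are all full-rank,
equivalently bounded below by `Λ·I` for some `Λ ∈ (0,1]`. -/
def AxCQ1 [Fintype d] [DecidableEq d]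
    (F : (n : ℕ) → Set ((Fin n → X) → Matrix (Fin n → d) (Fin n → d) ℂ)) : Prop :=
  ∀ n, ∃ Φfull ∈ F n, ∃ Λ : ℝ, 0 < Λ ∧ Λ ≤ 1 ∧
    ∀ xs, (Φfull xs - Λ • (1 : Matrix (Fin n → d) (Fin n → d) ℂ)).PosSemidef

/-- Axiom CQ2: each set is compact. -/
def AxCQ2 (F : (n : ℕ) → Set ((Fin n → X) → Matrix (Fin n → d) (Fin n → d) ℂ)) : Prop :=
  ∀ n, IsCompact (F n)

/-- Axiom CQ3: the family is closed under tensor products. -/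
def AxCQ3 (F : (n : ℕ) → Set ((Fin n → X) → Matrix (Fin n → d) (Fin n → d) ℂ)) : Prop :=
  ∀ n m, ∀ Φ ∈ F n, ∀ Ψ ∈ F m, cqTensor Φ Ψ ∈ F (n + m)

/-- Axiom CQ4: each set is convex. -/
def AxCQ4 (F : (n : ℕ) → Set ((Fin n → X) → Matrix (Fin n → d) (Fin n → d) ℂ)) : Prop :=
  ∀ n, Convex ℝ (F n)

/-- Single-set version of Axiom CQ1. -/
def SetCQ1 [Fintype d] [DecidableEq d] (S : Set (X → Matrix d d ℂ)) : Prop :=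
  ∃ Φfull ∈ S, ∃ Λ : ℝ, 0 < Λ ∧ Λ ≤ 1 ∧ ∀ x, (Φfull x - Λ • (1 : Matrix d d ℂ)).PosSemidef

/-- Trace distance `(1/2)‖A−B‖₁` (for Hermitian differences; junk `0` otherwise). -/
def traceDist [Fintype d] [DecidableEq d] (A B : Matrix d d ℂ) : ℝ :=
  if h : (A - B).IsHermitian then (1 / 2) * ∑ i, |h.eigenvalues i| else 0

/-- Diamond distance between CQ channels. -/
def diamondDist [Fintype X] [Fintype d] [DecidableEq d] (Φ₁ Φ₂ : X → Matrix d d ℂ) : ℝ :=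
  ⨆ x, traceDist (Φ₁ x) (Φ₂ x)

/-- Generalized robustness of a CQ channel with respect to a set of free CQ channels. -/
def genRobustness [Fintype X] [Fintype d] (S : Set (X → Matrix d d ℂ))
    (Φ : X → Matrix d d ℂ) : ℝ :=
  sInf { s | 0 ≤ s ∧ ∃ Φ' : X → Matrix d d ℂ, IsCQChannel Φ' ∧
    (fun x => (1 + s)⁻¹ • (Φ x + s • Φ' x)) ∈ S }

/-- `N ⊗ id_k` acting blockwise. -/
def tensorIdMap {din dout : Type*}
    (N : Matrix din din ℂ →ₗ[ℂ] Matrix dout dout ℂ) (k : Type*)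
    (M : Matrix (din × k) (din × k) ℂ) : Matrix (dout × k) (dout × k) ℂ :=
  Matrix.of fun a b => N (Matrix.of fun i j => M (i, a.2) (j, b.2)) a.1 b.1

/-- Completely positive and trace preserving linear map on matrices. -/
def IsCPTP {din dout : Type*} [Fintype din] [Fintype dout]
    (N : Matrix din din ℂ →ₗ[ℂ] Matrix dout dout ℂ) : Prop :=
  (∀ (k : Type) [Fintype k], ∀ M : Matrix (din × k) (din × k) ℂ,
      M.PosSemidef → (tensorIdMap N k M).PosSemidef) ∧
  ∀ M : Matrix din din ℂ, (N M).trace = M.trace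

/-- Action `(Θ ⊗ id)[Φ]` of a superchannel (given by `p_Θ` and CPTP maps `N`) on a CQ channel
with auxiliary classical input and quantum output. -/
def superAct {Xin Xout Xaux din dout daux : Type*} [Fintype Xin]
    (p : Xout → Xin → ℝ)
    (N : Xin → Xout → Matrix din din ℂ →ₗ[ℂ] Matrix dout dout ℂ)
    (Φ : Xin × Xaux → Matrix (din × daux) (din × daux) ℂ) :
    Xout × Xaux → Matrix (dout × daux) (dout × daux) ℂ :=
  fun x => ∑ xi : Xin, p x.1 xi • tensorIdMap (N xi x.1) daux (Φ (xi, x.2))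

/-- The index `b·M + m` of the `m`-th member of the `b`-th complete block of size `M`. -/
def grpIdx {n M : ℕ} (b : Fin (n / M)) (m : Fin M) : Fin n :=
  ⟨(b : ℕ) * M + m, by
    have h1 : ((b : ℕ) + 1) * M ≤ n / M * M :=
      Nat.mul_le_mul_right M b.2
    have h3 : n / M * M ≤ n := Nat.div_mul_le_self n M
    have h4 : (m : ℕ) < M := m.2
    have h5 : (b : ℕ) * M + M ≤ n := by rw [add_mul, one_mul] at h1; omega
    omega⟩

/-- The index `(n/M)·M + k` of the `k`-th leftover position. -/
def remIdx {n M : ℕ} (k : Fin (n % M)) : Fin n :=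
  ⟨n / M * M + k, by
    have h1 : n / M * M + n % M = n := by rw [mul_comm]; exact Nat.div_add_mod n M
    have h2 : (k : ℕ) < n % M := k.2
    omega⟩

/-- The channel `(Φ₂^{(M)})^{⊗ (n/M)} ⊗ Φfull^{⊗ (n % M)}`, realized entrywise on `n` tensor
factors grouped into blocks of size `M` followed by the leftover factors. -/
def mixedPow {M : ℕ} (Φ₂M : (Fin M → X) → Matrix (Fin M → d) (Fin M → d) ℂ)
    (Φfull : X → Matrix d d ℂ) (n : ℕ) :
    (Fin n → X) → Matrix (Fin n → d) (Fin n → d) ℂ :=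
  fun xs => Matrix.of fun i j =>
    (∏ b : Fin (n / M), Φ₂M (fun m => xs (grpIdx b m)) (fun m => i (grpIdx b m))
        (fun m => j (grpIdx b m))) *
    (∏ k : Fin (n % M), Φfull (xs (remIdx k)) (i (remIdx k)) (j (remIdx k)))


section FunCalc
variable [Fintype d] [DecidableEq d]

/-- Conjugation by a unitary as an `ℝ`-algebra homomorphism. -/
def conjAH (U : Matrix.unitaryGroup d ℂ) : Matrix d d ℂ →ₐ[ℝ] Matrix d d ℂ where
  toFun M := U * M * star (U : Matrix d d ℂ)
  map_one' := by
    show (U : Matrix d d ℂ) * 1 * star (U : Matrix d d ℂ) = 1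
    rw [mul_one]
    exact Matrix.mem_unitaryGroup_iff.mp U.2
  map_mul' M N := by
    have h : star (U : Matrix d d ℂ) * U = 1 := Matrix.mem_unitaryGroup_iff'.mp U.2
    show (U : Matrix d d ℂ) * (M * N) * star (U : Matrix d d ℂ)
        = ((U : Matrix d d ℂ) * M * star (U : Matrix d d ℂ))
          * ((U : Matrix d d ℂ) * N * star (U : Matrix d d ℂ))
    simp only [← mul_assoc]
    rw [mul_assoc ((U : Matrix d d ℂ) * M) (star (U : Matrix d d ℂ)) (U : Matrix d d ℂ), h,
      mul_one]
  map_zero' := by simp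
  map_add' M N := by
    simp [Matrix.mul_add, Matrix.add_mul]
  commutes' r := by
    have h : (U : Matrix d d ℂ) * star (U : Matrix d d ℂ) = 1 :=
      Matrix.mem_unitaryGroup_iff.mp U.2
    simp only [Algebra.algebraMap_eq_smul_one]
    rw [mul_smul_comm, mul_one, smul_mul_assoc, h]

lemma conjAH_apply (U : Matrix.unitaryGroup d ℂ) (M : Matrix d d ℂ) :
    conjAH U M = U * M * star (U : Matrix d d ℂ) := rfl

/-- `diagonal` as an `ℝ`-algebra homomorphism. -/
def diagAH : (d → ℂ) →ₐ[ℝ] Matrix d d ℂ where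
  toFun := Matrix.diagonal
  map_one' := Matrix.diagonal_one
  map_mul' v w := (Matrix.diagonal_mul_diagonal v w).symm
  map_zero' := Matrix.diagonal_zero
  map_add' v w := (Matrix.diagonal_add v w).symm
  commutes' r := (Matrix.algebraMap_eq_diagonal r).symm

lemma aeval_unitary_conj (U : Matrix.unitaryGroup d ℂ) (M : Matrix d d ℂ) (p : Polynomial ℝ) :
    Polynomial.aeval ((U : Matrix d d ℂ) * M * star (U : Matrix d d ℂ)) p
      = U * Polynomial.aeval M p * star (U : Matrix d d ℂ) :=
  Polynomial.aeval_algHom_apply (conjAH U) M p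

lemma aeval_diagonal (v : d → ℂ) (p : Polynomial ℝ) :
    Polynomial.aeval (Matrix.diagonal v) p
      = Matrix.diagonal (fun i => Polynomial.aeval (v i) p) := by
  have h := Polynomial.aeval_algHom_apply (diagAH (d := d)) v p
  have h2 : Polynomial.aeval v p = fun i => Polynomial.aeval (v i) p := by
    funext i
    exact (Polynomial.aeval_algHom_apply (Pi.evalAlgHom ℝ (fun _ => ℂ) i) v p).symm
  rw [h2] at h
  exact h

lemma aeval_real_coe (x : ℝ) (p : Polynomial ℝ) :
    Polynomial.aeval ((x : ℂ)) p = ((p.eval x : ℝ) : ℂ) := by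
  have h := Polynomial.aeval_algebraMap_apply ℂ x p
  rw [show ((x : ℂ)) = algebraMap ℝ ℂ x from rfl, h, Polynomial.coe_aeval_eq_eval]
  rfl

/-- Well-definedness of the functional calculus: it can be computed through any unitary
diagonalization with real diagonal. -/
lemma matFun_conj_diag (f : ℝ → ℝ) (U : Matrix.unitaryGroup d ℂ) (g : d → ℝ)
    {A : Matrix d d ℂ}
    (hAeq : A = (U : Matrix d d ℂ) * Matrix.diagonal (fun i => (g i : ℂ))
        * star (U : Matrix d d ℂ)) :
    matFun f A = (U : Matrix d d ℂ) * Matrix.diagonal (fun i => (f (g i) : ℂ))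
        * star (U : Matrix d d ℂ) := by
  have hdiagH : (Matrix.diagonal (fun i => ((g i : ℝ) : ℂ))).IsHermitian := by
    rw [Matrix.isHermitian_diagonal_iff]
    intro i
    exact Complex.conj_ofReal (g i)
  have hA : A.IsHermitian := by
    rw [hAeq]
    exact Matrix.isHermitian_mul_mul_conjTranspose _ hdiagH
  -- interpolation polynomial
  classical
  set s : Finset ℝ := (Finset.univ.image g) ∪ (Finset.univ.image hA.eigenvalues) with hs
  set p : Polynomial ℝ := Lagrange.interpolate s id f with hp
  have hmem1 : ∀ i, g i ∈ s := fun i => Finset.mem_union_left _ (Finset.mem_image_of_mem _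
    (Finset.mem_univ i))
  have hmem2 : ∀ i, hA.eigenvalues i ∈ s := fun i => Finset.mem_union_right _
    (Finset.mem_image_of_mem _ (Finset.mem_univ i))
  have heval : ∀ x ∈ s, p.eval x = f x := by
    intro x hx
    exact Lagrange.eval_interpolate_at_node f (Set.injOn_id _) hx
  have key : ∀ (V : Matrix.unitaryGroup d ℂ) (h : d → ℝ), (∀ i, h i ∈ s) →
      Polynomial.aeval ((V : Matrix d d ℂ) * Matrix.diagonal (fun i => (h i : ℂ))
        * star (V : Matrix d d ℂ)) p
      = (V : Matrix d d ℂ) * Matrix.diagonal (fun i => (f (h i) : ℂ))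
        * star (V : Matrix d d ℂ) := by
    intro V h hh
    rw [aeval_unitary_conj, aeval_diagonal]
    have : (fun i => Polynomial.aeval ((h i : ℂ)) p) = fun i => ((f (h i) : ℝ) : ℂ) := by
      funext i
      rw [aeval_real_coe, heval _ (hh i)]
    rw [this]
  have e1 := key U g hmem1
  have e2 := key hA.eigenvectorUnitary hA.eigenvalues hmem2
  have hAspec : A = (hA.eigenvectorUnitary : Matrix d d ℂ)
      * Matrix.diagonal (fun i => ((hA.eigenvalues i : ℝ) : ℂ))
      * star (hA.eigenvectorUnitary : Matrix d d ℂ) := by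
    simpa [Function.comp_def] using hA.spectral_theorem
  rw [← hAspec] at e2
  rw [← hAeq] at e1
  simp only [matFun, dif_pos hA]
  calc (hA.eigenvectorUnitary : Matrix d d ℂ)
        * Matrix.diagonal (fun i => ((f (hA.eigenvalues i) : ℝ) : ℂ))
        * star (hA.eigenvectorUnitary : Matrix d d ℂ)
      = Polynomial.aeval A p := e2.symm
    _ = _ := e1

lemma matFun_spec {A : Matrix d d ℂ} (hA : A.IsHermitian) (f : ℝ → ℝ) :
    matFun f A = (hA.eigenvectorUnitary : Matrix d d ℂ)
      * Matrix.diagonal (fun i => (f (hA.eigenvalues i) : ℂ))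
      * star (hA.eigenvectorUnitary : Matrix d d ℂ) := by
  simp only [matFun, dif_pos hA]

lemma spectral' {A : Matrix d d ℂ} (hA : A.IsHermitian) :
    A = (hA.eigenvectorUnitary : Matrix d d ℂ)
      * Matrix.diagonal (fun i => ((hA.eigenvalues i : ℝ) : ℂ))
      * star (hA.eigenvectorUnitary : Matrix d d ℂ) := by
  simpa [Function.comp_def] using hA.spectral_theorem

lemma matFun_congr {A : Matrix d d ℂ} (hA : A.IsHermitian) {f g : ℝ → ℝ}
    (h : ∀ i, f (hA.eigenvalues i) = g (hA.eigenvalues i)) : matFun f A = matFun g A := by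
  have he : (fun i => (f (hA.eigenvalues i) : ℂ)) = fun i => (g (hA.eigenvalues i) : ℂ) := by
    funext i
    rw [h i]
  rw [matFun_spec hA, matFun_spec hA, he]

lemma diag_real_isHermitian (v : d → ℝ) :
    (Matrix.diagonal (fun i => ((v i : ℝ) : ℂ))).IsHermitian := by
  rw [Matrix.isHermitian_diagonal_iff]
  intro i
  exact Complex.conj_ofReal (v i)

lemma matFun_isHermitian {A : Matrix d d ℂ} (f : ℝ → ℝ) (hA : A.IsHermitian) :
    (matFun f A).IsHermitian := by
  rw [matFun_spec hA]
  exact Matrix.isHermitian_mul_mul_conjTranspose _ (diag_real_isHermitian _)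

lemma matFun_posSemidef {A : Matrix d d ℂ} (hA : A.IsHermitian) {f : ℝ → ℝ}
    (hf : ∀ i, 0 ≤ f (hA.eigenvalues i)) : (matFun f A).PosSemidef := by
  rw [matFun_spec hA]
  exact (Matrix.posSemidef_diagonal_iff.mpr
    (fun i => Complex.zero_le_real.mpr (hf i))).mul_mul_conjTranspose_same _

lemma matFun_mul_matFun {A : Matrix d d ℂ} (hA : A.IsHermitian) (f g : ℝ → ℝ) :
    matFun f A * matFun g A = matFun (fun t => f t * g t) A := by
  have h : star (hA.eigenvectorUnitary : Matrix d d ℂ)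
      * (hA.eigenvectorUnitary : Matrix d d ℂ) = 1 :=
    Matrix.mem_unitaryGroup_iff'.mp hA.eigenvectorUnitary.2
  rw [matFun_spec hA f, matFun_spec hA g, matFun_spec hA]
  have hd : Matrix.diagonal (fun i => (f (hA.eigenvalues i) : ℂ))
      * Matrix.diagonal (fun i => (g (hA.eigenvalues i) : ℂ))
      = Matrix.diagonal (fun i => ((f (hA.eigenvalues i) * g (hA.eigenvalues i) : ℝ) : ℂ)) := by
    rw [Matrix.diagonal_mul_diagonal]
    ext i j
    by_cases hij : i = j
    · subst hij
      simp [Matrix.diagonal_apply_eq, Complex.ofReal_mul]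
    · simp [Matrix.diagonal_apply_ne _ hij]
  calc (hA.eigenvectorUnitary : Matrix d d ℂ)
        * Matrix.diagonal (fun i => (f (hA.eigenvalues i) : ℂ))
        * star (hA.eigenvectorUnitary : Matrix d d ℂ)
        * ((hA.eigenvectorUnitary : Matrix d d ℂ)
          * Matrix.diagonal (fun i => (g (hA.eigenvalues i) : ℂ))
          * star (hA.eigenvectorUnitary : Matrix d d ℂ))
      = (hA.eigenvectorUnitary : Matrix d d ℂ)
        * (Matrix.diagonal (fun i => (f (hA.eigenvalues i) : ℂ))
          * ((star (hA.eigenvectorUnitary : Matrix d d ℂ)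
            * (hA.eigenvectorUnitary : Matrix d d ℂ))
            * (Matrix.diagonal (fun i => (g (hA.eigenvalues i) : ℂ))
              * star (hA.eigenvectorUnitary : Matrix d d ℂ)))) := by
        simp only [mul_assoc]
    _ = _ := by
        rw [h, one_mul, show Matrix.diagonal (fun i => (f (hA.eigenvalues i) : ℂ))
            * (Matrix.diagonal (fun i => (g (hA.eigenvalues i) : ℂ))
              * star (hA.eigenvectorUnitary : Matrix d d ℂ))
          = Matrix.diagonal (fun i => (f (hA.eigenvalues i) : ℂ))
            * Matrix.diagonal (fun i => (g (hA.eigenvalues i) : ℂ))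
            * star (hA.eigenvectorUnitary : Matrix d d ℂ) from (mul_assoc _ _ _).symm, hd,
          ← mul_assoc]

lemma matFun_id {A : Matrix d d ℂ} (hA : A.IsHermitian) : matFun (fun t => t) A = A := by
  rw [matFun_spec hA]
  exact (spectral' hA).symm

lemma matFun_comp {A : Matrix d d ℂ} (hA : A.IsHermitian) (f g : ℝ → ℝ) :
    matFun f (matFun g A) = matFun (fun t => f (g t)) A := by
  rw [matFun_conj_diag f hA.eigenvectorUnitary (fun i => g (hA.eigenvalues i))
    (matFun_spec hA g), matFun_spec hA]

lemma trace_matFun {A : Matrix d d ℂ} (hA : A.IsHermitian) (f : ℝ → ℝ) :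
    (matFun f A).trace = ∑ i, (f (hA.eigenvalues i) : ℂ) := by
  have h : star (hA.eigenvectorUnitary : Matrix d d ℂ)
      * (hA.eigenvectorUnitary : Matrix d d ℂ) = 1 :=
    Matrix.mem_unitaryGroup_iff'.mp hA.eigenvectorUnitary.2
  rw [matFun_spec hA, Matrix.trace_mul_cycle, h, one_mul, Matrix.trace_diagonal]

lemma trace_diagonal_mul (v : d → ℂ) (M : Matrix d d ℂ) :
    (Matrix.diagonal v * M).trace = ∑ i, v i * M i i := by
  simp [Matrix.trace, Matrix.diag, Matrix.diagonal_mul]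

lemma trace_matFun_mul {A : Matrix d d ℂ} (hA : A.IsHermitian) (f : ℝ → ℝ) (B : Matrix d d ℂ) :
    (matFun f A * B).trace = ∑ i, (f (hA.eigenvalues i) : ℂ)
      * ((star (hA.eigenvectorUnitary : Matrix d d ℂ) * B
          * (hA.eigenvectorUnitary : Matrix d d ℂ)) i i) := by
  rw [matFun_spec hA]
  rw [show (hA.eigenvectorUnitary : Matrix d d ℂ)
      * Matrix.diagonal (fun i => (f (hA.eigenvalues i) : ℂ))
      * star (hA.eigenvectorUnitary : Matrix d d ℂ) * B
    = (hA.eigenvectorUnitary : Matrix d d ℂ)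
      * (Matrix.diagonal (fun i => (f (hA.eigenvalues i) : ℂ))
        * (star (hA.eigenvectorUnitary : Matrix d d ℂ) * B)) by simp only [mul_assoc]]
  rw [Matrix.trace_mul_comm, mul_assoc, trace_diagonal_mul]

lemma posSemidef_diag_entry_nonneg {M : Matrix d d ℂ} (hM : M.PosSemidef) (i : d) :
    0 ≤ (M i i).re := by
  exact (Complex.le_def.mp (hM.diag_nonneg (i := i))).1

lemma posSemidef_diag_entry_re (hM : (M : Matrix d d ℂ).IsHermitian) (i : d) :
    ((M i i).re : ℂ) = M i i := by
  have := congrFun (congrFun hM i) i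
  rw [Matrix.conjTranspose_apply] at this
  exact Complex.conj_eq_iff_re.mp this

end FunCalc

section Charpoly
variable [Fintype d] [DecidableEq d]
open Polynomial

lemma charpoly_conj (N M : Matrix d d ℂ) (hN : IsUnit N.det) :
    (N * M * N⁻¹).charpoly = M.charpoly := by
  have hmap : ∀ (P Q : Matrix d d ℂ),
      (C : ℂ →+* ℂ[X]).mapMatrix (P * Q)
        = (C : ℂ →+* ℂ[X]).mapMatrix P * (C : ℂ →+* ℂ[X]).mapMatrix Q := by
    intro P Q
    simp only [RingHom.mapMatrix_apply]
    exact Matrix.map_mul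
  have hinv : (C : ℂ →+* ℂ[X]).mapMatrix N * (C : ℂ →+* ℂ[X]).mapMatrix N⁻¹ = 1 := by
    rw [← hmap, Matrix.mul_nonsing_inv N hN]
    simp
  have hch : charmatrix (N * M * N⁻¹)
      = (C : ℂ →+* ℂ[X]).mapMatrix N * charmatrix M * (C : ℂ →+* ℂ[X]).mapMatrix N⁻¹ := by
    rw [charmatrix, charmatrix, mul_sub, sub_mul, hmap, hmap]
    congr 1
    have hcomm : Matrix.scalar d (X : ℂ[X]) * (C : ℂ →+* ℂ[X]).mapMatrix N
        = (C : ℂ →+* ℂ[X]).mapMatrix N * Matrix.scalar d (X : ℂ[X]) :=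
      (Matrix.scalar_commute (X : ℂ[X]) (fun r => Commute.all _ r) _).eq
    rw [← hcomm, mul_assoc, hinv, mul_one]
  rw [Matrix.charpoly, hch, Matrix.det_mul, Matrix.det_mul, mul_comm, ← mul_assoc,
    ← Matrix.det_mul, ← hmap, Matrix.nonsing_inv_mul N hN]
  simp [Matrix.charpoly]

lemma charpoly_mul_comm (A B : Matrix d d ℂ) : (A * B).charpoly = (B * A).charpoly := by
  -- key: equality for all shifts `A + t • 1` with invertible matrix
  have key : ∀ t : ℂ, IsUnit (A + t • 1).det →
      ((A + t • 1) * B).charpoly = (B * (A + t • 1)).charpoly := by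
    intro t ht
    set N := A + t • 1
    have h1 : N * (B * N) * N⁻¹ = N * B := by
      rw [mul_assoc, mul_assoc, Matrix.mul_nonsing_inv N ht, mul_one]
    calc (N * B).charpoly = (N * (B * N) * N⁻¹).charpoly := by rw [h1]
      _ = (B * N).charpoly := charpoly_conj N (B * N) ht
  -- the bad set of `t` is finite
  have hq : (charpoly (-A)) ≠ 0 := (Matrix.charpoly_monic (-A)).ne_zero
  have hdet : ∀ t : ℂ, eval t (charpoly (-A)) = (A + t • 1).det := by
    intro t
    have h1 : (evalRingHom t) ((charmatrix (-A)).det)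
        = ((evalRingHom t).mapMatrix (charmatrix (-A))).det :=
      RingHom.map_det (evalRingHom t) (charmatrix (-A))
    have h2 : (evalRingHom t).mapMatrix (charmatrix (-A)) = A + t • 1 := by
      ext i j
      by_cases hij : i = j
      · subst hij
        simp [charmatrix_apply_eq, Matrix.one_apply_eq]
        ring
      · simp [charmatrix_apply_ne _ _ _ hij, Matrix.one_apply_ne hij,
          Matrix.diagonal_apply_ne _ hij]
    rw [Matrix.charpoly] at *
    calc eval t (charmatrix (-A)).det = (evalRingHom t) ((charmatrix (-A)).det) := rfl
      _ = _ := by rw [h1, h2]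
  have hbad : {t : ℂ | ¬ IsUnit (A + t • 1).det}.Finite := by
    apply Set.Finite.subset (Polynomial.finite_setOf_isRoot hq)
    intro t ht
    simp only [Set.mem_setOf_eq, isUnit_iff_ne_zero, not_not] at ht
    simp only [Set.mem_setOf_eq, IsRoot, hdet t, ht]
  have hgood : {t : ℂ | IsUnit (A + t • 1).det}.Infinite := by
    have := hbad.infinite_compl
    simpa [Set.compl_setOf] using this
  -- lift to polynomial matrices
  set 𝔸 : Matrix d d ℂ[X] := (C : ℂ →+* ℂ[X]).mapMatrix A + (X : ℂ[X]) • 1 with h𝔸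
  set 𝔹 : Matrix d d ℂ[X] := (C : ℂ →+* ℂ[X]).mapMatrix B with h𝔹
  have hmapA : ∀ t : ℂ, ((evalRingHom t).mapMatrix 𝔸) = A + t • 1 := by
    intro t
    ext i j
    by_cases hij : i = j
    · subst hij
      simp [h𝔸, Matrix.one_apply_eq]
    · simp [h𝔸, Matrix.one_apply_ne hij]
  have hmapB : ∀ t : ℂ, ((evalRingHom t).mapMatrix 𝔹) = B := by
    intro t
    ext i j
    simp [h𝔹]
  have hmapmul : ∀ (t : ℂ) (P Q : Matrix d d ℂ[X]),
      (evalRingHom t).mapMatrix (P * Q)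
        = (evalRingHom t).mapMatrix P * (evalRingHom t).mapMatrix Q := by
    intro t P Q
    simp only [RingHom.mapMatrix_apply]
    exact Matrix.map_mul
  have hmapA' : ∀ t : ℂ, 𝔸.map ⇑(evalRingHom t) = A + t • 1 := by
    intro t
    rw [← RingHom.mapMatrix_apply]
    exact hmapA t
  have hmapB' : ∀ t : ℂ, 𝔹.map ⇑(evalRingHom t) = B := by
    intro t
    rw [← RingHom.mapMatrix_apply]
    exact hmapB t
  have hmapmul' : ∀ (t : ℂ) (P Q : Matrix d d ℂ[X]),
      (P * Q).map ⇑(evalRingHom t)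
        = P.map ⇑(evalRingHom t) * Q.map ⇑(evalRingHom t) := by
    intro t P Q
    rw [← RingHom.mapMatrix_apply, ← RingHom.mapMatrix_apply, ← RingHom.mapMatrix_apply]
    exact hmapmul t P Q
  -- coefficientwise equality
  have hPQ : (𝔸 * 𝔹).charpoly = (𝔹 * 𝔸).charpoly := by
    apply Polynomial.ext
    intro n
    apply Polynomial.eq_of_infinite_eval_eq
    apply Set.Infinite.mono _ hgood
    intro t ht
    simp only [Set.mem_setOf_eq] at ht ⊢
    have e1 : ((𝔸 * 𝔹).charpoly).map (evalRingHom t) = ((A + t • 1) * B).charpoly := by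
      rw [← Matrix.charpoly_map, hmapmul' t, hmapA' t, hmapB' t]
    have e2 : ((𝔹 * 𝔸).charpoly).map (evalRingHom t) = (B * (A + t • 1)).charpoly := by
      rw [← Matrix.charpoly_map, hmapmul' t, hmapA' t, hmapB' t]
    have e3 := key t ht
    have e4 : ((𝔸 * 𝔹).charpoly).map (evalRingHom t)
        = ((𝔹 * 𝔸).charpoly).map (evalRingHom t) := by rw [e1, e2, e3]
    have e5 := congrArg (fun p => Polynomial.coeff p n) e4
    simpa [Polynomial.coeff_map] using e5
  -- evaluate at t = 0
  have f1 : ((𝔸 * 𝔹).charpoly).map (evalRingHom 0) = (A * B).charpoly := by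
    rw [← Matrix.charpoly_map, hmapmul' 0, hmapA' 0, hmapB' 0]
    simp
  have f2 : ((𝔹 * 𝔸).charpoly).map (evalRingHom 0) = (B * A).charpoly := by
    rw [← Matrix.charpoly_map, hmapmul' 0, hmapA' 0, hmapB' 0]
    simp
  rw [← f1, ← f2, hPQ]

lemma charpoly_unitary_conj (U : Matrix.unitaryGroup d ℂ) (M : Matrix d d ℂ) :
    ((U : Matrix d d ℂ) * M * star (U : Matrix d d ℂ)).charpoly = M.charpoly := by
  have h : star (U : Matrix d d ℂ) * (U : Matrix d d ℂ) = 1 :=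
    Matrix.mem_unitaryGroup_iff'.mp U.2
  calc ((U : Matrix d d ℂ) * M * star (U : Matrix d d ℂ)).charpoly
      = (star (U : Matrix d d ℂ) * ((U : Matrix d d ℂ) * M)).charpoly :=
        charpoly_mul_comm _ _
    _ = M.charpoly := by rw [← mul_assoc, h, one_mul]

lemma charpoly_diagonal (w : d → ℂ) :
    (Matrix.diagonal w).charpoly = ∏ i, (Polynomial.X - C (w i)) := by
  have h : charmatrix (Matrix.diagonal w) = Matrix.diagonal (fun i => Polynomial.X - C (w i)) := by
    ext i j
    by_cases hij : i = j
    · subst hij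
      simp [charmatrix_apply_eq]
    · simp [charmatrix_apply_ne _ _ _ hij, Matrix.diagonal_apply_ne _ hij]
  rw [Matrix.charpoly, h, Matrix.det_diagonal]

lemma charpoly_hermitian {A : Matrix d d ℂ} (hA : A.IsHermitian) :
    A.charpoly = ∏ i, (Polynomial.X - C ((hA.eigenvalues i : ℂ))) := by
  conv_lhs => rw [spectral' hA]
  rw [charpoly_unitary_conj, charpoly_diagonal]

lemma eigen_multiset_eq {A B : Matrix d d ℂ} (hA : A.IsHermitian) (hB : B.IsHermitian)
    (h : A.charpoly = B.charpoly) :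
    Multiset.map (fun i => ((hA.eigenvalues i : ℝ) : ℂ)) Finset.univ.val
      = Multiset.map (fun i => ((hB.eigenvalues i : ℝ) : ℂ)) Finset.univ.val := by
  have ha := charpoly_hermitian hA
  have hb := charpoly_hermitian hB
  have key : ∀ (C' : Matrix d d ℂ) (hC : C'.IsHermitian),
      (Multiset.map (fun i => ((hC.eigenvalues i : ℝ) : ℂ)) Finset.univ.val)
        = C'.charpoly.roots := by
    intro C' hC
    rw [charpoly_hermitian hC, Finset.prod_eq_multiset_prod,
      show Multiset.map (fun i => Polynomial.X - C ((hC.eigenvalues i : ℝ) : ℂ)) Finset.univ.val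
        = Multiset.map (fun z => Polynomial.X - C z)
            (Multiset.map (fun i => ((hC.eigenvalues i : ℝ) : ℂ)) Finset.univ.val) by
        rw [Multiset.map_map]
        rfl,
      Polynomial.roots_multiset_prod_X_sub_C]
  rw [key A hA, key B hB, h]

lemma sum_eigen_fun_eq {A B : Matrix d d ℂ} (hA : A.IsHermitian) (hB : B.IsHermitian)
    (h : A.charpoly = B.charpoly) (f : ℝ → ℝ) :
    ∑ i, f (hA.eigenvalues i) = ∑ i, f (hB.eigenvalues i) := by
  have hm := eigen_multiset_eq hA hB h
  have := congrArg (fun s : Multiset ℂ => (s.map (fun z => f z.re)).sum) hm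
  simp only [Multiset.map_map, Function.comp] at this
  rw [Finset.sum_eq_multiset_sum, Finset.sum_eq_multiset_sum]
  simpa [Complex.ofReal_re] using this

end Charpoly


section ScalarIneq

lemma weighted_holder {ι : Type*} [Fintype ι] {p q : ℝ} (hpq : p.HolderConjugate q)
    (w x y : ι → ℝ) (hw : ∀ i, 0 ≤ w i) (hx : ∀ i, 0 ≤ x i) (hy : ∀ i, 0 ≤ y i) :
    ∑ i, w i * (x i * y i)
      ≤ (∑ i, w i * x i ^ p) ^ (1/p) * (∑ i, w i * y i ^ q) ^ (1/q) := by
  have hp0 : p ≠ 0 := ne_of_gt hpq.pos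
  have hq0 : q ≠ 0 := ne_of_gt hpq.symm.pos
  have key := Real.inner_le_Lp_mul_Lq_of_nonneg Finset.univ hpq
      (f := fun i => w i ^ (1/p) * x i) (g := fun i => w i ^ (1/q) * y i)
      (fun i _ => mul_nonneg (Real.rpow_nonneg (hw i) _) (hx i))
      (fun i _ => mul_nonneg (Real.rpow_nonneg (hw i) _) (hy i))
  have e1 : ∀ i : ι, (w i ^ (1/p) * x i) * (w i ^ (1/q) * y i) = w i * (x i * y i) := by
    intro i
    have hww : w i ^ (1/p) * w i ^ (1/q) = w i := by
      rw [← Real.rpow_add' (hw i) (by rw [one_div, one_div, hpq.inv_add_inv_eq_one]; norm_num)]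
      rw [one_div, one_div, hpq.inv_add_inv_eq_one, Real.rpow_one]
    calc (w i ^ (1/p) * x i) * (w i ^ (1/q) * y i)
        = (w i ^ (1/p) * w i ^ (1/q)) * (x i * y i) := by ring
      _ = w i * (x i * y i) := by rw [hww]
  have e2 : ∀ i : ι, (w i ^ (1/p) * x i) ^ p = w i * x i ^ p := by
    intro i
    rw [Real.mul_rpow (Real.rpow_nonneg (hw i) _) (hx i), ← Real.rpow_mul (hw i),
      one_div, inv_mul_cancel₀ hp0, Real.rpow_one]
  have e3 : ∀ i : ι, (w i ^ (1/q) * y i) ^ q = w i * y i ^ q := by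
    intro i
    rw [Real.mul_rpow (Real.rpow_nonneg (hw i) _) (hy i), ← Real.rpow_mul (hw i),
      one_div, inv_mul_cancel₀ hq0, Real.rpow_one]
  simp only [e1, e2, e3] at key
  exact key

lemma weighted_jensen_rpow {ι : Type*} [Fintype ι] {q : ℝ} (hq : 1 < q) (w x : ι → ℝ)
    (hw : ∀ i, 0 ≤ w i) (hw1 : ∑ i, w i ≤ 1) (hx : ∀ i, 0 ≤ x i) :
    (∑ i, w i * x i) ^ q ≤ ∑ i, w i * x i ^ q := by
  have hpq : q.HolderConjugate q.conjExponent := Real.HolderConjugate.conjExponent hq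
  have h := weighted_holder hpq w x (fun _ => 1) hw hx (fun _ => zero_le_one)
  simp only [mul_one, Real.one_rpow] at h
  have h2 : (∑ i, w i) ^ (1 / q.conjExponent) ≤ 1 :=
    Real.rpow_le_one (Finset.sum_nonneg fun i _ => hw i) hw1
      (le_of_lt (by rw [one_div]; exact inv_pos.mpr hpq.symm.pos))
  have h3 : ∑ i, w i * x i ≤ (∑ i, w i * x i ^ q) ^ (1/q) := by
    calc ∑ i, w i * x i ≤ (∑ i, w i * x i ^ q) ^ (1/q) * (∑ i, w i) ^ (1/q.conjExponent) := h
      _ ≤ (∑ i, w i * x i ^ q) ^ (1/q) * 1 := by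
          apply mul_le_mul_of_nonneg_left h2
          exact Real.rpow_nonneg (Finset.sum_nonneg fun i _ =>
            mul_nonneg (hw i) (Real.rpow_nonneg (hx i) _)) _
      _ = _ := mul_one _
  have hs : 0 ≤ ∑ i, w i * x i := Finset.sum_nonneg fun i _ => mul_nonneg (hw i) (hx i)
  have hs' : 0 ≤ ∑ i, w i * x i ^ q := Finset.sum_nonneg fun i _ =>
    mul_nonneg (hw i) (Real.rpow_nonneg (hx i) _)
  calc (∑ i, w i * x i) ^ q ≤ ((∑ i, w i * x i ^ q) ^ (1/q)) ^ q :=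
        Real.rpow_le_rpow hs h3 (le_of_lt hpq.pos)
    _ = ∑ i, w i * x i ^ q := by
        rw [← Real.rpow_mul hs', one_div, inv_mul_cancel₀ (ne_of_gt hpq.pos), Real.rpow_one]

end ScalarIneq

section MatIneq
variable [Fintype d] [DecidableEq d]

lemma star_unitary_mul_unitary {U V : Matrix.unitaryGroup d ℂ} :
    (star (U : Matrix d d ℂ) * (V : Matrix d d ℂ))
      * (star (U : Matrix d d ℂ) * (V : Matrix d d ℂ))ᴴ = 1 ∧
    (star (U : Matrix d d ℂ) * (V : Matrix d d ℂ))ᴴ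
      * (star (U : Matrix d d ℂ) * (V : Matrix d d ℂ)) = 1 := by
  have hU1 : (U : Matrix d d ℂ) * star (U : Matrix d d ℂ) = 1 :=
    Matrix.mem_unitaryGroup_iff.mp U.2
  have hU2 : star (U : Matrix d d ℂ) * (U : Matrix d d ℂ) = 1 :=
    Matrix.mem_unitaryGroup_iff'.mp U.2
  have hV1 : (V : Matrix d d ℂ) * star (V : Matrix d d ℂ) = 1 :=
    Matrix.mem_unitaryGroup_iff.mp V.2
  have hV2 : star (V : Matrix d d ℂ) * (V : Matrix d d ℂ) = 1 :=
    Matrix.mem_unitaryGroup_iff'.mp V.2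
  have hh : (star (U : Matrix d d ℂ) * (V : Matrix d d ℂ))ᴴ
      = star (V : Matrix d d ℂ) * (U : Matrix d d ℂ) := by
    rw [Matrix.conjTranspose_mul]
    simp [Matrix.star_eq_conjTranspose]
  constructor
  · rw [hh, mul_assoc, ← mul_assoc (V : Matrix d d ℂ), hV1, one_mul, hU2]
  · rw [hh, mul_assoc, ← mul_assoc (U : Matrix d d ℂ), hU1, one_mul, hV2]

/-- Rewrite the trace of a product of two Hermitian matrices as a doubly-indexed sum over
eigenvalues weighted by squared overlaps. -/
lemma trace_mul_re_eq_eigen_sum {G Xm : Matrix d d ℂ} (hG : G.IsHermitian)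
    (hX : Xm.IsHermitian) :
    ((G * Xm).trace).re = ∑ i, ∑ j, hG.eigenvalues i * hX.eigenvalues j
        * Complex.normSq ((star (hG.eigenvectorUnitary : Matrix d d ℂ)
            * (hX.eigenvectorUnitary : Matrix d d ℂ)) i j) := by
  set U := (hG.eigenvectorUnitary : Matrix d d ℂ)
  set V := (hX.eigenvectorUnitary : Matrix d d ℂ)
  set W := star U * V with hW
  have hG' := spectral' hG
  have hX' := spectral' hX
  have h1 : G * Xm = U * (Matrix.diagonal (fun i => ((hG.eigenvalues i : ℝ) : ℂ))
      * (W * Matrix.diagonal (fun j => ((hX.eigenvalues j : ℝ) : ℂ)) * star V)) := by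
    conv_lhs => rw [hG', hX']
    simp only [hW, mul_assoc]
    rfl
  have h2 : (G * Xm).trace = (Matrix.diagonal (fun i => ((hG.eigenvalues i : ℝ) : ℂ))
      * (W * Matrix.diagonal (fun j => ((hX.eigenvalues j : ℝ) : ℂ)) * (star V * U))).trace := by
    rw [h1, Matrix.trace_mul_comm]
    simp only [mul_assoc]
  have hVU : star V * U = Wᴴ := by
    rw [hW, Matrix.conjTranspose_mul]
    simp [Matrix.star_eq_conjTranspose]
  rw [h2, hVU, trace_diagonal_mul, Complex.re_sum]
  apply Finset.sum_congr rfl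
  intro i _
  have h3 : (W * Matrix.diagonal (fun j => ((hX.eigenvalues j : ℝ) : ℂ)) * Wᴴ) i i
      = ∑ j, ((hX.eigenvalues j : ℝ) : ℂ) * Complex.normSq (W i j) := by
    rw [Matrix.mul_apply]
    apply Finset.sum_congr rfl
    intro j _
    rw [Matrix.mul_diagonal, Matrix.conjTranspose_apply]
    calc W i j * ((hX.eigenvalues j : ℝ) : ℂ) * star (W i j)
        = ((hX.eigenvalues j : ℝ) : ℂ) * (W i j * star (W i j)) := by ring
      _ = _ := by rw [show W i j * star (W i j) = ((Complex.normSq (W i j) : ℝ) : ℂ) from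
            Complex.mul_conj (W i j)]
  rw [h3, Finset.mul_sum, Complex.re_sum]
  apply Finset.sum_congr rfl
  intro j _
  push_cast
  simp [Complex.mul_re]
  ring

/-- **Hölder's inequality for traces** of positive semidefinite matrices. -/
lemma trace_holder {G Xm : Matrix d d ℂ} (hG : G.PosSemidef) (hX : Xm.PosSemidef)
    {p q : ℝ} (hpq : p.HolderConjugate q) :
    ((G * Xm).trace).re ≤ ((matFun (fun t => t ^ p) G).trace).re ^ (1/p)
      * ((matFun (fun t => t ^ q) Xm).trace).re ^ (1/q) := by
  have hGH := hG.isHermitian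
  have hXH := hX.isHermitian
  set U := (hGH.eigenvectorUnitary : Matrix d d ℂ)
  set V := (hXH.eigenvectorUnitary : Matrix d d ℂ)
  set W := star U * V with hWdef
  obtain ⟨hW1, hW2⟩ := star_unitary_mul_unitary (U := hGH.eigenvectorUnitary)
    (V := hXH.eigenvectorUnitary)
  have hrow : ∀ i, ∑ j, Complex.normSq (W i j) = 1 := by
    intro i
    have := congrFun (congrFun hW1 i) i
    rw [Matrix.mul_apply] at this
    have e : ∀ j, W i j * Wᴴ j i = ((Complex.normSq (W i j) : ℝ) : ℂ) := by
      intro j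
      rw [Matrix.conjTranspose_apply]
      exact Complex.mul_conj (W i j)
    rw [Finset.sum_congr rfl (fun j _ => e j)] at this
    have := congrArg Complex.re this
    rw [Complex.re_sum] at this
    simpa [Matrix.one_apply_eq] using this
  have hcol : ∀ j, ∑ i, Complex.normSq (W i j) = 1 := by
    intro j
    have := congrFun (congrFun hW2 j) j
    rw [Matrix.mul_apply] at this
    have e : ∀ i, Wᴴ j i * W i j = ((Complex.normSq (W i j) : ℝ) : ℂ) := by
      intro i
      rw [Matrix.conjTranspose_apply]
      rw [show star (W i j) * W i j = W i j * star (W i j) from mul_comm _ _]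
      exact Complex.mul_conj (W i j)
    rw [Finset.sum_congr rfl (fun i _ => e i)] at this
    have := congrArg Complex.re this
    rw [Complex.re_sum] at this
    simpa [Matrix.one_apply_eq] using this
  rw [trace_mul_re_eq_eigen_sum hGH hXH]
  have hh := weighted_holder (ι := d × d) hpq
      (fun ij => Complex.normSq (W ij.1 ij.2))
      (fun ij => hGH.eigenvalues ij.1) (fun ij => hXH.eigenvalues ij.2)
      (fun ij => Complex.normSq_nonneg _)
      (fun ij => hG.eigenvalues_nonneg ij.1) (fun ij => hX.eigenvalues_nonneg ij.2)
  have tr_p : ((matFun (fun t => t ^ p) G).trace).re = ∑ i, hGH.eigenvalues i ^ p := by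
    rw [trace_matFun hGH, Complex.re_sum]
    simp
  have tr_q : ((matFun (fun t => t ^ q) Xm).trace).re = ∑ j, hXH.eigenvalues j ^ q := by
    rw [trace_matFun hXH, Complex.re_sum]
    simp
  have e1 : ∑ ij : d × d, Complex.normSq (W ij.1 ij.2) * hGH.eigenvalues ij.1 ^ p
      = ∑ i, hGH.eigenvalues i ^ p := by
    rw [← Finset.univ_product_univ, Finset.sum_product]
    refine Finset.sum_congr rfl fun i _ => ?_
    have hb : ∀ y : d, Complex.normSq (W (i, y).1 (i, y).2) * hGH.eigenvalues (i, y).1 ^ p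
        = Complex.normSq (W i y) * hGH.eigenvalues i ^ p := fun y => rfl
    rw [Finset.sum_congr rfl (fun y _ => hb y), ← Finset.sum_mul, hrow i, one_mul]
  have e2 : ∑ ij : d × d, Complex.normSq (W ij.1 ij.2) * hXH.eigenvalues ij.2 ^ q
      = ∑ j, hXH.eigenvalues j ^ q := by
    rw [← Finset.univ_product_univ, Finset.sum_product, Finset.sum_comm]
    refine Finset.sum_congr rfl fun j _ => ?_
    have hb : ∀ y : d, Complex.normSq (W (y, j).1 (y, j).2) * hXH.eigenvalues (y, j).2 ^ q
        = Complex.normSq (W y j) * hXH.eigenvalues j ^ q := fun y => rfl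
    rw [Finset.sum_congr rfl (fun y _ => hb y), ← Finset.sum_mul, hcol j, one_mul]
  have lhs_eq : ∑ i, ∑ j, hGH.eigenvalues i * hXH.eigenvalues j * Complex.normSq (W i j)
      = ∑ ij : d × d, Complex.normSq (W ij.1 ij.2)
          * (hGH.eigenvalues ij.1 * hXH.eigenvalues ij.2) := by
    rw [← Finset.univ_product_univ, Finset.sum_product]
    exact Finset.sum_congr rfl fun i _ => Finset.sum_congr rfl fun j _ => by ring
  rw [lhs_eq, tr_p, tr_q, ← e1, ← e2]
  exact hh

lemma matRpow_isHermitian {A : Matrix d d ℂ} (hA : A.IsHermitian) (r : ℝ) :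
    (matRpow A r).IsHermitian := matFun_isHermitian _ hA

lemma matRpow_posSemidef {A : Matrix d d ℂ} (hA : A.PosSemidef) (r : ℝ) :
    (matRpow A r).PosSemidef :=
  matFun_posSemidef hA.isHermitian (fun i => Real.rpow_nonneg (hA.eigenvalues_nonneg i) r)

lemma matRpow_half_mul {T : Matrix d d ℂ} (hT : T.PosSemidef) :
    matRpow T (1/2) * matRpow T (1/2) = T := by
  rw [matRpow, matFun_mul_matFun hT.isHermitian]
  rw [matFun_congr hT.isHermitian (g := fun t => t)
    (fun i => by
      rw [← Real.rpow_add' (hT.eigenvalues_nonneg i) (by norm_num)]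
      norm_num)]
  exact matFun_id hT.isHermitian

/-- **Brown–Kosaki-type trace inequality**: for `0 ≤ T ≤ 1`, `A` PSD and `q > 1`,
`Tr[(T^{1/2} A T^{1/2})^q] ≤ Tr[A^q T]`. -/
lemma brown_kosaki {T A : Matrix d d ℂ} (hT : T.PosSemidef) (hT1 : (1 - T).PosSemidef)
    (hA : A.PosSemidef) {q : ℝ} (hq : 1 < q) :
    ((matRpow (matRpow T (1/2) * A * matRpow T (1/2)) q).trace).re
      ≤ ((matRpow A q * T).trace).re := by
  set C := matRpow T (1/2) with hCdef
  have hCH : C.IsHermitian := matRpow_isHermitian hT.isHermitian _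
  have hCsq : C * C = T := matRpow_half_mul hT
  set M := C * A * C with hMdef
  have hM : M.PosSemidef := by
    have := hA.mul_mul_conjTranspose_same C
    rwa [hCH.eq] at this
  have hMH := hM.isHermitian
  have hAH := hA.isHermitian
  set U := (hAH.eigenvectorUnitary : Matrix d d ℂ) with hUdef
  set V := (hMH.eigenvectorUnitary : Matrix d d ℂ) with hVdef
  have hU1 : U * star U = 1 := Matrix.mem_unitaryGroup_iff.mp hAH.eigenvectorUnitary.2
  have hU2 : star U * U = 1 := Matrix.mem_unitaryGroup_iff'.mp hAH.eigenvectorUnitary.2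
  have hV1 : V * star V = 1 := Matrix.mem_unitaryGroup_iff.mp hMH.eigenvectorUnitary.2
  have hV2 : star V * V = 1 := Matrix.mem_unitaryGroup_iff'.mp hMH.eigenvectorUnitary.2
  set S := star U * C * V with hSdef
  have hSH : Sᴴ = star V * C * U := by
    rw [hSdef, Matrix.conjTranspose_mul, Matrix.conjTranspose_mul]
    simp only [Matrix.star_eq_conjTranspose, Matrix.conjTranspose_conjTranspose, hCH.eq,
      mul_assoc]
  -- diagonalization of M
  have hdiag : star V * M * V
      = Matrix.diagonal (fun j => ((hMH.eigenvalues j : ℝ) : ℂ)) := by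
    have := hMH.conjStarAlgAut_star_eigenvectorUnitary
    rw [Unitary.conjStarAlgAut_star_apply] at this
    exact this
  have hform : star V * M * V = Sᴴ * Matrix.diagonal (fun i => ((hAH.eigenvalues i : ℝ) : ℂ))
      * S := by
    have hAspec := spectral' hAH
    rw [hSH, hSdef, hMdef]
    conv_lhs => rw [hAspec]
    simp only [← hUdef, mul_assoc]
  have key1 : ∀ j, hMH.eigenvalues j
      = ∑ i, Complex.normSq (S i j) * hAH.eigenvalues i := by
    intro j
    have h1 := congrFun (congrFun (hform.symm.trans hdiag) j) j
    have h2 : (Sᴴ * Matrix.diagonal (fun i => ((hAH.eigenvalues i : ℝ) : ℂ)) * S) j j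
        = ∑ i, ((Complex.normSq (S i j) * hAH.eigenvalues i : ℝ) : ℂ) := by
      rw [Matrix.mul_apply]
      apply Finset.sum_congr rfl
      intro i _
      rw [Matrix.mul_diagonal, Matrix.conjTranspose_apply]
      push_cast
      calc star (S i j) * ((hAH.eigenvalues i : ℝ) : ℂ) * S i j
          = ((hAH.eigenvalues i : ℝ) : ℂ) * (S i j * star (S i j)) := by ring
        _ = _ := by
            rw [show S i j * star (S i j) = ((Complex.normSq (S i j) : ℝ) : ℂ) from
              Complex.mul_conj (S i j)]
            push_cast
            ring
    rw [h2] at h1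
    have h3 : ((∑ i, ((Complex.normSq (S i j) * hAH.eigenvalues i : ℝ) : ℂ))).re
        = ((hMH.eigenvalues j : ℝ) : ℂ).re := by rw [h1, Matrix.diagonal_apply_eq]
    rw [Complex.re_sum] at h3
    simp only [Complex.ofReal_re] at h3
    exact h3.symm
  -- column sums at most one
  have key2 : ∀ j, ∑ i, Complex.normSq (S i j) ≤ 1 := by
    intro j
    have hSS : Sᴴ * S = star V * T * V := by
      rw [hSH, hSdef]
      calc star V * C * U * (star U * C * V)
          = star V * C * (U * star U) * C * V := by simp only [mul_assoc]
        _ = star V * (C * C) * V := by rw [hU1]; simp only [mul_one, mul_assoc]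
        _ = star V * T * V := by rw [hCsq]
    have hdiagentry : ((Sᴴ * S) j j).re = ∑ i, Complex.normSq (S i j) := by
      rw [Matrix.mul_apply]
      rw [Complex.re_sum]
      apply Finset.sum_congr rfl
      intro i _
      rw [Matrix.conjTranspose_apply]
      rw [show star (S i j) * S i j = S i j * star (S i j) from mul_comm _ _,
        show S i j * star (S i j) = ((Complex.normSq (S i j) : ℝ) : ℂ) from
          Complex.mul_conj (S i j)]
      simp
    have hpsd : (1 - star V * T * V).PosSemidef := by
      have h0 := hT1.mul_mul_conjTranspose_same (star V)
      have : star V * (1 - T) * (star V)ᴴ = 1 - star V * T * V := by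
        rw [Matrix.star_eq_conjTranspose, Matrix.conjTranspose_conjTranspose]
        rw [Matrix.mul_sub, Matrix.sub_mul, mul_one]
        rw [show (V)ᴴ * V = 1 from hV2]
      rwa [this] at h0
    have hentry := posSemidef_diag_entry_nonneg hpsd j
    have h1 : 0 ≤ 1 - ((star V * T * V) j j).re := by
      have e : ((1 - star V * T * V) j j).re = 1 - ((star V * T * V) j j).re := by
        rw [Matrix.sub_apply, Complex.sub_re, Matrix.one_apply_eq]
        simp
      rw [e] at hentry
      exact hentry
    rw [← hSS] at h1
    rw [← hdiagentry]
    linarith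
  -- per-column Jensen
  have key3 : ∀ j, hMH.eigenvalues j ^ q
      ≤ ∑ i, Complex.normSq (S i j) * hAH.eigenvalues i ^ q := by
    intro j
    rw [key1 j]
    exact weighted_jensen_rpow hq _ _ (fun i => Complex.normSq_nonneg _) (key2 j)
      (fun i => hA.eigenvalues_nonneg i)
  -- assemble
  have lhs_eq : ((matRpow M q).trace).re = ∑ j, hMH.eigenvalues j ^ q := by
    rw [matRpow, trace_matFun hMH, Complex.re_sum]
    simp
  have hSSstar : S * Sᴴ = star U * T * U := by
    rw [hSH, hSdef]
    calc star U * C * V * (star V * C * U)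
        = star U * C * (V * star V) * C * U := by simp only [mul_assoc]
      _ = star U * (C * C) * U := by rw [hV1]; simp only [mul_one, mul_assoc]
      _ = star U * T * U := by rw [hCsq]
  have rhs_eq : ((matRpow A q * T).trace).re
      = ∑ i, hAH.eigenvalues i ^ q * ((star U * T * U) i i).re := by
    rw [matRpow, trace_matFun_mul hAH, Complex.re_sum]
    apply Finset.sum_congr rfl
    intro i _
    simp [Complex.mul_re, hUdef]
  have mid_eq : ∀ i, ((star U * T * U) i i).re = ∑ j, Complex.normSq (S i j) := by
    intro i
    rw [← hSSstar, Matrix.mul_apply, Complex.re_sum]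
    apply Finset.sum_congr rfl
    intro j _
    rw [Matrix.conjTranspose_apply,
      show S i j * star (S i j) = ((Complex.normSq (S i j) : ℝ) : ℂ) from
        Complex.mul_conj (S i j)]
    simp
  rw [lhs_eq, rhs_eq]
  calc ∑ j, hMH.eigenvalues j ^ q
      ≤ ∑ j, ∑ i, Complex.normSq (S i j) * hAH.eigenvalues i ^ q :=
        Finset.sum_le_sum (fun j _ => key3 j)
    _ = ∑ i, ∑ j, Complex.normSq (S i j) * hAH.eigenvalues i ^ q := Finset.sum_comm
    _ = ∑ i, hAH.eigenvalues i ^ q * ((star U * T * U) i i).re := by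
        apply Finset.sum_congr rfl
        intro i _
        rw [mid_eq i, Finset.mul_sum]
        apply Finset.sum_congr rfl
        intro j _
        ring

end MatIneq


section Supp
variable [Fintype d] [DecidableEq d]

lemma matRpow_def (A : Matrix d d ℂ) (r : ℝ) : matRpow A r = matFun (fun t => t ^ r) A := rfl

/-- The support projection of a matrix. -/
def suppProj (σ : Matrix d d ℂ) : Matrix d d ℂ := matFun (fun t => if t = 0 then 0 else 1) σ

lemma suppProj_isHermitian {σ : Matrix d d ℂ} (hσ : σ.IsHermitian) :
    (suppProj σ).IsHermitian := matFun_isHermitian _ hσ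

lemma suppProj_mul_self {σ : Matrix d d ℂ} (hσ : σ.IsHermitian) : suppProj σ * σ = σ := by
  have h1 : suppProj σ * matFun (fun t => t) σ
      = matFun (fun t => (if t = 0 then (0:ℝ) else 1) * t) σ := matFun_mul_matFun hσ _ _
  have h2 : matFun (fun t => (if t = 0 then (0:ℝ) else 1) * t) σ = matFun (fun t => t) σ := by
    apply matFun_congr hσ
    intro i
    by_cases h : hσ.eigenvalues i = 0 <;> simp [h]
  rw [matFun_id hσ] at h1
  rw [h1, h2, matFun_id hσ]

lemma matRpow_mul_matRpow_neg {σ : Matrix d d ℂ} (hσ : σ.PosSemidef) {r : ℝ} (hr : 0 < r) :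
    matRpow σ r * matRpow σ (-r) = suppProj σ := by
  rw [matRpow_def, matRpow_def, matFun_mul_matFun hσ.isHermitian]
  apply matFun_congr hσ.isHermitian
  intro i
  rcases eq_or_lt_of_le (hσ.eigenvalues_nonneg i) with h | h
  · rw [← h]
    rw [Real.zero_rpow (ne_of_gt hr), Real.zero_rpow (by simpa using (ne_of_gt hr))]
    simp
  · rw [← Real.rpow_add h, add_neg_cancel, Real.rpow_zero]
    simp [ne_of_gt h]

lemma suppProj_mul_of_suppLE {ρ σ : Matrix d d ℂ} (hρ : ρ.PosSemidef) (hσ : σ.PosSemidef)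
    (hsupp : suppLE ρ σ) : suppProj σ * ρ = ρ ∧ ρ * suppProj σ = ρ := by
  have hPσ : suppProj σ * σ = σ := suppProj_mul_self hσ.isHermitian
  have h1 : suppProj σ * ρ = ρ := by
    apply Matrix.toLin'.injective
    apply LinearMap.ext
    intro v
    have hmem : ρ *ᵥ v ∈ LinearMap.range (Matrix.toLin' σ) := by
      apply hsupp
      exact ⟨v, Matrix.toLin'_apply ρ v⟩
    obtain ⟨w, hw⟩ := hmem
    rw [Matrix.toLin'_apply] at hw
    have : (suppProj σ * ρ) *ᵥ v = suppProj σ *ᵥ (ρ *ᵥ v) := (Matrix.mulVec_mulVec _ _ _).symm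
    rw [Matrix.toLin'_apply, Matrix.toLin'_apply, this, ← hw, Matrix.mulVec_mulVec, hPσ]
  refine ⟨h1, ?_⟩
  have h2 : (suppProj σ * ρ)ᴴ = ρ * suppProj σ := by
    rw [Matrix.conjTranspose_mul, hρ.isHermitian.eq, (suppProj_isHermitian hσ.isHermitian).eq]
  rw [← h2, h1, hρ.isHermitian.eq]

lemma posSemidef_trace_re_nonneg {M : Matrix d d ℂ} (hM : M.PosSemidef) : 0 ≤ M.trace.re := by
  rw [Matrix.trace, Complex.re_sum]
  exact Finset.sum_nonneg fun i _ => posSemidef_diag_entry_nonneg hM i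

lemma trace_mul_psd_nonneg {A B : Matrix d d ℂ} (hA : A.PosSemidef) (hB : B.PosSemidef) :
    0 ≤ ((A * B).trace).re := by
  have hs := matRpow_isHermitian hB.isHermitian (1/2)
  have hmul : A * B = A * matRpow B (1/2) * matRpow B (1/2) := by
    rw [mul_assoc, matRpow_half_mul hB]
  have htr : (A * B).trace = (matRpow B (1/2) * A * matRpow B (1/2)).trace := by
    rw [hmul, Matrix.trace_mul_cycle]
  rw [htr]
  apply posSemidef_trace_re_nonneg
  have := hA.mul_mul_conjTranspose_same (matRpow B (1/2))
  rwa [hs.eq] at this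

lemma trace_matFun_mul_comm (R : Matrix d d ℂ) (f : ℝ → ℝ) :
    ((matFun f (R * Rᴴ)).trace).re = ((matFun f (Rᴴ * R)).trace).re := by
  have h1 := (Matrix.posSemidef_self_mul_conjTranspose R).isHermitian
  have h2 := (Matrix.posSemidef_conjTranspose_mul_self R).isHermitian
  rw [trace_matFun h1, trace_matFun h2, Complex.re_sum, Complex.re_sum]
  simp only [Complex.ofReal_re]
  exact sum_eigen_fun_eq h1 h2 (charpoly_mul_comm R Rᴴ) f

/-- **One-shot bound**: for `ρ, σ ≥ 0` with `supp ρ ⊆ supp σ` and a POVM element `T`,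
`(Tr[Tρ])^α ≤ Q̃_α(ρ‖σ) · (Tr[Tσ])^(α-1)`. -/
lemma one_shot {ρ σ T : Matrix d d ℂ} (hρ : ρ.PosSemidef) (hσ : σ.PosSemidef)
    (hsupp : suppLE ρ σ) (hT : T.PosSemidef) (hT1 : (1 - T).PosSemidef) {α : ℝ} (hα : 1 < α) :
    ((T * ρ).trace).re ^ α
      ≤ ((matRpow (matRpow σ ((1 - α)/(2*α)) * ρ * matRpow σ ((1 - α)/(2*α))) α).trace).re
        * ((T * σ).trace).re ^ (α - 1) := by
  have hα0 : (0:ℝ) < α := lt_trans one_pos hα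
  have hα1 : α - 1 ≠ 0 := sub_ne_zero.mpr (ne_of_gt hα)
  set β := α.conjExponent with hβdef
  have hαβ : α.HolderConjugate β := Real.HolderConjugate.conjExponent hα
  have hβ1 : 1 < β := hαβ.symm.lt
  set s' : ℝ := (1 - α)/(2*α) with hs'def
  set s'' : ℝ := (α - 1)/(2*α) with hs''def
  have hs'neg : s' = -s'' := by rw [hs'def, hs''def]; ring
  have hs''pos : 0 < s'' := div_pos (by linarith) (by linarith)
  set R1 := matRpow σ s' with hR1def
  set R2 := matRpow σ s'' with hR2def
  have hR1H : R1.IsHermitian := matRpow_isHermitian hσ.isHermitian _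
  have hR2H : R2.IsHermitian := matRpow_isHermitian hσ.isHermitian _
  set Xm := R1 * ρ * R1 with hXdef
  set G := R2 * T * R2 with hGdef
  have hXpsd : Xm.PosSemidef := by
    have := hρ.mul_mul_conjTranspose_same R1
    rwa [hR1H.eq] at this
  have hGpsd : G.PosSemidef := by
    have := hT.mul_mul_conjTranspose_same R2
    rwa [hR2H.eq] at this
  have hP21 : R2 * R1 = suppProj σ := by
    rw [hR1def, hR2def, hs'neg]
    exact matRpow_mul_matRpow_neg hσ hs''pos
  have hP12 : R1 * R2 = suppProj σ := by
    have h := hP21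
    rw [hR1def, hR2def, hs'neg] at h ⊢
    simp only [matRpow_def] at h ⊢
    rw [matFun_mul_matFun hσ.isHermitian] at h ⊢
    rw [show (fun t : ℝ => t ^ (-s'') * t ^ s'') = (fun t : ℝ => t ^ s'' * t ^ (-s'')) by
      funext t; ring]
    exact h
  obtain ⟨hPρ, hρP⟩ := suppProj_mul_of_suppLE hρ hσ hsupp
  -- trace identity
  have htr : ((G * Xm).trace) = ((T * ρ).trace) := by
    have e1 : G * Xm = R2 * T * (ρ * R1) := by
      rw [hGdef, hXdef]
      calc R2 * T * R2 * (R1 * ρ * R1) = R2 * T * (R2 * R1 * ρ) * R1 := by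
            simp only [mul_assoc]
        _ = R2 * T * (ρ * R1) := by rw [hP21, hPρ]; simp only [mul_assoc]
    rw [e1, Matrix.trace_mul_cycle, mul_assoc ρ R1 R2, hP12, hρP, Matrix.trace_mul_comm]
  -- Hölder
  have hHolder := trace_holder hGpsd hXpsd hαβ.symm
  rw [htr] at hHolder
  -- identify the G-term
  set Cc := matRpow T (1/2) with hCcdef
  have hCcH : Cc.IsHermitian := matRpow_isHermitian hT.isHermitian _
  set R := R2 * Cc with hRdef
  have hRH : Rᴴ = Cc * R2 := by
    rw [hRdef, Matrix.conjTranspose_mul, hCcH.eq, hR2H.eq]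
  have hRR : R * Rᴴ = G := by
    rw [hRdef, hRH, hGdef]
    calc R2 * Cc * (Cc * R2) = R2 * (Cc * Cc) * R2 := by simp only [mul_assoc]
      _ = R2 * T * R2 := by rw [matRpow_half_mul hT]
  set A' := matRpow σ (2*s'') with hA'def
  have hA'psd : A'.PosSemidef := matRpow_posSemidef hσ _
  have hR2R2 : R2 * R2 = A' := by
    rw [hR2def, hA'def, matRpow_def, matRpow_def, matFun_mul_matFun hσ.isHermitian]
    apply matFun_congr hσ.isHermitian
    intro i
    rcases eq_or_lt_of_le (hσ.eigenvalues_nonneg i) with h | h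
    · rw [← h, Real.zero_rpow (ne_of_gt hs''pos), Real.zero_rpow (by positivity), mul_zero]
    · rw [← Real.rpow_add h, two_mul]
  have hRstarR : Rᴴ * R = Cc * A' * Cc := by
    rw [hRdef, hRH]
    calc Cc * R2 * (R2 * Cc) = Cc * (R2 * R2) * Cc := by simp only [mul_assoc]
      _ = _ := by rw [hR2R2]
  -- the power of A' is σ
  have hA'pow : matRpow A' β = σ := by
    rw [hA'def, matRpow_def, matRpow_def, matFun_comp hσ.isHermitian]
    have harith : 2 * s'' * β = 1 := by
      rw [hs''def, hβdef, Real.conjExponent]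
      field_simp
    have : matFun (fun t => (t ^ (2*s'')) ^ β) σ = matFun (fun t => t) σ := by
      apply matFun_congr hσ.isHermitian
      intro i
      rw [← Real.rpow_mul (hσ.eigenvalues_nonneg i), harith, Real.rpow_one]
    rw [this, matFun_id hσ.isHermitian]
  -- bound the G-term by Tr[Tσ]
  have hGterm : ((matFun (fun t => t ^ β) G).trace).re ≤ ((T * σ).trace).re := by
    have e1 : ((matFun (fun t => t ^ β) G).trace).re
        = ((matFun (fun t => t ^ β) (Cc * A' * Cc)).trace).re := by
      rw [← hRR, ← hRstarR]
      exact trace_matFun_mul_comm R _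
    have e2 := brown_kosaki hT hT1 hA'psd hβ1
    rw [hA'pow] at e2
    rw [e1]
    have e3 : matFun (fun t => t ^ β) (Cc * A' * Cc)
        = matRpow (matRpow T (1/2) * A' * matRpow T (1/2)) β := by
      simp only [hCcdef, matRpow_def]
    rw [e3]
    exact le_trans e2 (le_of_eq (by rw [Matrix.trace_mul_comm]))
  -- combine
  set a := ((T * ρ).trace).re with hadef
  set b := ((T * σ).trace).re with hbdef
  set Q := ((matRpow Xm α).trace).re with hQdef
  have ha0 : 0 ≤ a := trace_mul_psd_nonneg hT hρ
  have hb0 : 0 ≤ b := trace_mul_psd_nonneg hT hσ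
  have hQ0 : 0 ≤ Q := posSemidef_trace_re_nonneg (matRpow_posSemidef hXpsd _)
  have hc0 : 0 ≤ ((matFun (fun t => t ^ β) G).trace).re :=
    posSemidef_trace_re_nonneg (matFun_posSemidef hGpsd.isHermitian
      (fun i => Real.rpow_nonneg (hGpsd.eigenvalues_nonneg i) _))
  have hQeq : ((matFun (fun t => t ^ α) Xm).trace).re = Q := by rw [hQdef, matRpow_def]
  rw [hQeq] at hHolder
  have step1 : a ≤ b ^ (1/β) * Q ^ (1/α) := by
    refine le_trans hHolder ?_
    apply mul_le_mul_of_nonneg_right _ (Real.rpow_nonneg hQ0 _)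
    exact Real.rpow_le_rpow hc0 hGterm (by positivity)
  have step2 : a ^ α ≤ (b ^ (1/β) * Q ^ (1/α)) ^ α :=
    Real.rpow_le_rpow ha0 step1 (le_of_lt hα0)
  have step3 : (b ^ (1/β) * Q ^ (1/α)) ^ α = Q * b ^ (α - 1) := by
    rw [Real.mul_rpow (Real.rpow_nonneg hb0 _) (Real.rpow_nonneg hQ0 _)]
    rw [← Real.rpow_mul hb0, ← Real.rpow_mul hQ0]
    rw [show (1:ℝ)/α * α = 1 from by field_simp, Real.rpow_one]
    have h := hαβ.inv_add_inv_eq_one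
    have hb : (1:ℝ)/β = 1 - 1/α := by
      rw [one_div, one_div]
      linarith
    rw [hb, sub_mul, one_mul, one_div, inv_mul_cancel₀ (ne_of_gt hα0), mul_comm]
  rw [step3] at step2
  exact step2

end Supp

/-- **Bound on type II errors between CQ channels** (Lemma 3.4): for `α > 1`, `ε ∈ [0,1)`, and
CQ channels `Φ₁, Φ₂ : X → D(H)`,
`−log β_ε(Φ₁‖Φ₂) ≤ D̃_α(Φ₁‖Φ₂) + (α/(α−1)) log(1/(1−ε))`. -/
theorem bound_on_typeII_errors_between_CQ_channels
    {X d : Type*} [Fintype X] [Nonempty X] [Fintype d] [DecidableEq d]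
    (α ε : ℝ) (hα : 1 < α) (hε0 : 0 ≤ ε) (hε1 : ε < 1)
    (Φ₁ Φ₂ : X → Matrix d d ℂ) (h₁ : IsCQChannel Φ₁) (h₂ : IsCQChannel Φ₂) :
    ((-Real.log (typeIIErr ε Φ₁ Φ₂) : ℝ) : EReal) ≤
      chRenyiDiv α Φ₁ Φ₂ + (((α / (α - 1)) * Real.log (1 / (1 - ε)) : ℝ) : EReal) := by
  classical
  have hα0 : (0:ℝ) < α := lt_trans one_pos hα
  have hα1 : α - 1 ≠ 0 := sub_ne_zero.mpr (ne_of_gt hα)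
  have hα1pos : (0:ℝ) < α - 1 := by linarith
  by_cases htop : chRenyiDiv α Φ₁ Φ₂ = ⊤
  · rw [htop, EReal.top_add_of_ne_bot (EReal.coe_ne_bot _)]
    exact le_top
  have hne : ∀ x, sandRenyi α (Φ₁ x) (Φ₂ x) ≠ ⊤ := by
    intro x hx
    apply htop
    refine top_le_iff.mp ?_
    rw [← hx]
    exact le_iSup (fun x => sandRenyi α (Φ₁ x) (Φ₂ x)) x
  have hsupp : ∀ x, suppLE (Φ₁ x) (Φ₂ x) := by
    intro x
    by_contra h
    exact hne x (by rw [sandRenyi, if_neg h])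
  set Qf : X → ℝ := fun x => ((matRpow (matRpow (Φ₂ x) ((1 - α) / (2 * α)) * Φ₁ x
      * matRpow (Φ₂ x) ((1 - α) / (2 * α))) α).trace).re with hQfdef
  set E : X → ℝ := fun x => (α - 1)⁻¹ * Real.log (Qf x) with hEdef
  have hsand : ∀ x, sandRenyi α (Φ₁ x) (Φ₂ x) = ((E x : ℝ) : EReal) := by
    intro x
    rw [sandRenyi, if_pos (hsupp x)]
  set Dr : ℝ := Finset.univ.sup' Finset.univ_nonempty E with hDrdef
  have hDrle : ((Dr : ℝ) : EReal) ≤ chRenyiDiv α Φ₁ Φ₂ := by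
    obtain ⟨x₀, _, hx₀⟩ := Finset.exists_mem_eq_sup' Finset.univ_nonempty E
    rw [hDrdef, hx₀, ← hsand x₀]
    exact le_iSup (fun x => sandRenyi α (Φ₁ x) (Φ₂ x)) x₀
  have hEDr : ∀ x, E x ≤ Dr := fun x => Finset.le_sup' E (Finset.mem_univ x)
  set β : ℝ := α / (α - 1) with hβdef
  have hβ1 : 1 < β := by
    rw [hβdef, lt_div_iff₀ hα1pos]
    linarith
  have hβ0 : (0:ℝ) < β := lt_trans one_pos hβ1
  have hεpos : (0:ℝ) < 1 - ε := by linarith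
  set c₀ : ℝ := Real.exp (-Dr) * (1 - ε) ^ β with hc₀def
  have hc₀pos : 0 < c₀ := mul_pos (Real.exp_pos _) (Real.rpow_pos_of_pos hεpos _)
  set Sset := { v | ∃ p T, IsProbDist p ∧ (∀ x, IsPOVMElem (T x)) ∧ typeIErrVal Φ₁ p T ≤ ε ∧
    v = ∑ x, p x * ((T x * Φ₂ x).trace).re } with hSdef
  -- the feasible set is nonempty
  have hSne : Sset.Nonempty := by
    refine ⟨∑ x, (Fintype.card X : ℝ)⁻¹ * (((1 : Matrix d d ℂ) * Φ₂ x).trace).re,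
      fun _ => (Fintype.card X : ℝ)⁻¹, fun _ => (1 : Matrix d d ℂ), ?_, ?_, ?_, rfl⟩
    · constructor
      · intro x
        positivity
      · rw [Finset.sum_const, nsmul_eq_mul, Finset.card_univ]
        rw [mul_inv_cancel₀]
        exact Nat.cast_ne_zero.mpr Fintype.card_ne_zero
    · intro x
      exact ⟨Matrix.PosSemidef.one, by simp [Matrix.PosSemidef.zero]⟩
    · unfold typeIErrVal
      simp [hε0]
  -- every feasible value is at least `c₀`
  have hlb : ∀ v ∈ Sset, c₀ ≤ v := by
    rintro v ⟨p, Tf, hp, hPOVM, hI, rfl⟩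
    set q : X → ℝ := fun x => ((Tf x * Φ₁ x).trace).re with hqdef
    set r : X → ℝ := fun x => ((Tf x * Φ₂ x).trace).re with hrdef
    have hq0 : ∀ x, 0 ≤ q x := fun x => trace_mul_psd_nonneg (hPOVM x).1 (h₁ x).1
    have hr0 : ∀ x, 0 ≤ r x := fun x => trace_mul_psd_nonneg (hPOVM x).1 (h₂ x).1
    have hQ0 : ∀ x, 0 ≤ Qf x := fun x => posSemidef_trace_re_nonneg
      (matRpow_posSemidef (by
        have := (h₁ x).1.mul_mul_conjTranspose_same (matRpow (Φ₂ x) ((1 - α) / (2 * α)))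
        rwa [(matRpow_isHermitian (h₂ x).1.isHermitian _).eq] at this) _)
    -- one-shot bound per letter
    have hos : ∀ x, q x ^ α ≤ Qf x * r x ^ (α - 1) := fun x =>
      one_shot (h₁ x).1 (h₂ x).1 (hsupp x) (hPOVM x).1 (hPOVM x).2 hα
    -- bound Q by the divergence
    have hQle : ∀ x, Qf x ≤ Real.exp ((α - 1) * Dr) := by
      intro x
      rcases eq_or_lt_of_le (hQ0 x) with h | h
      · rw [← h]
        exact le_of_lt (Real.exp_pos _)
      · have h1 : Qf x = Real.exp ((α - 1) * E x) := by
          rw [hEdef]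
          show Qf x = Real.exp ((α - 1) * ((α - 1)⁻¹ * Real.log (Qf x)))
          rw [← mul_assoc, mul_inv_cancel₀ hα1, one_mul, Real.exp_log h]
        rw [h1]
        exact Real.exp_le_exp.mpr (by
          have := hEDr x
          nlinarith [hEDr x])
      
    -- pointwise lower bound on r
    have hrlow : ∀ x, Real.exp (-Dr) * q x ^ β ≤ r x := by
      intro x
      have h4 : q x ^ α ≤ Real.exp ((α - 1) * Dr) * r x ^ (α - 1) :=
        le_trans (hos x) (mul_le_mul_of_nonneg_right (hQle x)
          (Real.rpow_nonneg (hr0 x) _))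
      have h5 := Real.rpow_le_rpow (Real.rpow_nonneg (hq0 x) _) h4
        (le_of_lt (inv_pos.mpr hα1pos))
      have lhs_eq : (q x ^ α) ^ (α - 1)⁻¹ = q x ^ β := by
        rw [← Real.rpow_mul (hq0 x), hβdef, div_eq_mul_inv]
      have rhs_eq : (Real.exp ((α - 1) * Dr) * r x ^ (α - 1)) ^ (α - 1)⁻¹
          = Real.exp Dr * r x := by
        rw [Real.mul_rpow (le_of_lt (Real.exp_pos _)) (Real.rpow_nonneg (hr0 x) _)]
        rw [← Real.exp_mul, ← Real.rpow_mul (hr0 x), mul_inv_cancel₀ hα1, Real.rpow_one]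
        rw [show (α - 1) * Dr * (α - 1)⁻¹ = Dr by field_simp]
      rw [lhs_eq, rhs_eq] at h5
      calc Real.exp (-Dr) * q x ^ β ≤ Real.exp (-Dr) * (Real.exp Dr * r x) :=
            mul_le_mul_of_nonneg_left h5 (le_of_lt (Real.exp_pos _))
        _ = r x := by
            rw [← mul_assoc, ← Real.exp_add]
            simp
    -- type I error identity
    have hsumq : 1 - ε ≤ ∑ x, p x * q x := by
      have hid : typeIErrVal Φ₁ p Tf = 1 - ∑ x, p x * q x := by
        unfold typeIErrVal
        rw [eq_sub_iff_add_eq, ← Finset.sum_add_distrib]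
        have : ∀ x, p x * (((1 - Tf x) * Φ₁ x).trace).re + p x * q x = p x := by
          intro x
          have e1 : (1 - Tf x) * Φ₁ x = Φ₁ x - Tf x * Φ₁ x := by
            rw [Matrix.sub_mul, one_mul]
          rw [e1, Matrix.trace_sub, Complex.sub_re, (h₁ x).2, Complex.one_re, hqdef]
          ring
        rw [Finset.sum_congr rfl (fun x _ => this x)]
        exact hp.2
      rw [hid] at hI
      linarith
    have hsumq0 : 0 ≤ ∑ x, p x * q x :=
      Finset.sum_nonneg fun x _ => mul_nonneg (hp.1 x) (hq0 x)
    -- Jensen over letters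
    have hjensen : (∑ x, p x * q x) ^ β ≤ ∑ x, p x * q x ^ β :=
      Real.rpow_arith_mean_le_arith_mean_rpow Finset.univ p q (fun x _ => hp.1 x) hp.2
        (fun x _ => hq0 x) (le_of_lt hβ1)
    calc c₀ = Real.exp (-Dr) * (1 - ε) ^ β := hc₀def
      _ ≤ Real.exp (-Dr) * (∑ x, p x * q x) ^ β := by
          apply mul_le_mul_of_nonneg_left _ (le_of_lt (Real.exp_pos _))
          exact Real.rpow_le_rpow (le_of_lt hεpos) hsumq (le_of_lt hβ0)
      _ ≤ Real.exp (-Dr) * ∑ x, p x * q x ^ β :=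
          mul_le_mul_of_nonneg_left hjensen (le_of_lt (Real.exp_pos _))
      _ = ∑ x, p x * (Real.exp (-Dr) * q x ^ β) := by
          rw [Finset.mul_sum]
          exact Finset.sum_congr rfl fun x _ => by ring
      _ ≤ ∑ x, p x * r x :=
          Finset.sum_le_sum fun x _ => mul_le_mul_of_nonneg_left (hrlow x) (hp.1 x)
  -- lower bound on the infimum
  have hinf : c₀ ≤ typeIIErr ε Φ₁ Φ₂ := le_csInf hSne hlb
  have hpos : 0 < typeIIErr ε Φ₁ Φ₂ := lt_of_lt_of_le hc₀pos hinf
  -- logarithms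
  have hlogc₀ : Real.log c₀ = -Dr + β * Real.log (1 - ε) := by
    rw [hc₀def, Real.log_mul (ne_of_gt (Real.exp_pos _))
      (ne_of_gt (Real.rpow_pos_of_pos hεpos _)), Real.log_exp, Real.log_rpow hεpos]
  have hlog : -Real.log (typeIIErr ε Φ₁ Φ₂) ≤ Dr + β * Real.log (1 / (1 - ε)) := by
    have h1 : Real.log c₀ ≤ Real.log (typeIIErr ε Φ₁ Φ₂) := Real.log_le_log hc₀pos hinf
    rw [one_div, Real.log_inv]
    rw [hlogc₀] at h1
    linarith
  calc ((-Real.log (typeIIErr ε Φ₁ Φ₂) : ℝ) : EReal)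
      ≤ ((Dr + β * Real.log (1 / (1 - ε)) : ℝ) : EReal) := EReal.coe_le_coe_iff.mpr hlog
    _ = ((Dr : ℝ) : EReal) + ((β * Real.log (1 / (1 - ε)) : ℝ) : EReal) := by
        rw [EReal.coe_add]
    _ ≤ chRenyiDiv α Φ₁ Φ₂ + (((α / (α - 1)) * Real.log (1 / (1 - ε)) : ℝ) : EReal) := by
        rw [← hβdef]
        exact add_le_add hDrle le_rfl

end CQ
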